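/- For the Helmholtz oscillator with friction y'' = -c·y² + a·y' + (6/25)·a²·y, the function I(x,y,z) = (72a⁴y - 600a²cy² + 1250c²y³ + 360a³z - 1500acyz + 1875cz²)·e^{-(6a/5)x} is a first integral, i.e. ∂ₓI + z·∂_yI + (-cy² + az + (6/25)a²y)·∂_zI = 0 identically on ℝ³. -/

import Mathlib

noncomputable def pdx (F : ℝ × ℝ × ℝ → ℝ) (p : ℝ × ℝ × ℝ) : ℝ :=
  deriv (fun t => F (t, p.2.1, p.2.2)) p.1

noncomputable def pdy (F : ℝ × ℝ × ℝ → ℝ) (p : ℝ × ℝ × ℝ) : ℝ :=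
  deriv (fun t => F (p.1, t, p.2.2)) p.2.1

noncomputable def pdz (F : ℝ × ℝ × ℝ → ℝ) (p : ℝ × ℝ × ℝ) : ℝ :=
  deriv (fun t => F (p.1, p.2.1, t)) p.2.2

/-- The Cartan vector field `D = ∂ₓ + z ∂_y + φ ∂_z` of `y'' = φ(x,y,y')`. -/
noncomputable def Dtot (φ F : ℝ × ℝ × ℝ → ℝ) (p : ℝ × ℝ × ℝ) : ℝ :=
  pdx F p + p.2.2 * pdy F p + φ p * pdz F p

/-- Evaluation of a polynomial in three variables at a point of ℝ³. -/
noncomputable def mev (P : MvPolynomial (Fin 3) ℝ) (p : ℝ × ℝ × ℝ) : ℝ :=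
  MvPolynomial.eval ![p.1, p.2.1, p.2.2] P

/-- First integral of the Helmholtz oscillator with friction, case b = (6/25)a². -/
theorem helmholtz_case1 (a c : ℝ) :
    ∀ p : ℝ × ℝ × ℝ,
      Dtot (fun q => -c * q.2.1 ^ 2 + a * q.2.2 + (6 / 25) * a ^ 2 * q.2.1)
        (fun q => (72 * a ^ 4 * q.2.1 - 600 * a ^ 2 * c * q.2.1 ^ 2
            + 1250 * c ^ 2 * q.2.1 ^ 3 + 360 * a ^ 3 * q.2.2
            - 1500 * a * c * q.2.1 * q.2.2 + 1875 * c * q.2.2 ^ 2)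
          * Real.exp (-(6 * a / 5) * q.1)) p = 0 := by
  rintro ⟨x, y, z⟩
  have hx : deriv (fun t => (72 * a ^ 4 * y - 600 * a ^ 2 * c * y ^ 2
      + 1250 * c ^ 2 * y ^ 3 + 360 * a ^ 3 * z - 1500 * a * c * y * z
      + 1875 * c * z ^ 2) * Real.exp (-(6 * a / 5) * t)) x
      = (72 * a ^ 4 * y - 600 * a ^ 2 * c * y ^ 2 + 1250 * c ^ 2 * y ^ 3
        + 360 * a ^ 3 * z - 1500 * a * c * y * z + 1875 * c * z ^ 2)
        * (-(6 * a / 5) * Real.exp (-(6 * a / 5) * x)) := by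
    have : HasDerivAt (fun t : ℝ => Real.exp (-(6 * a / 5) * t))
        (-(6 * a / 5) * Real.exp (-(6 * a / 5) * x)) x := by
      have h := (((hasDerivAt_id x).const_mul (-(6 * a / 5)))).exp
      simp only [id_eq] at h
      convert h using 1 <;> ring
    exact (this.const_mul _).deriv
  have hy : deriv (fun t => (72 * a ^ 4 * t - 600 * a ^ 2 * c * t ^ 2
      + 1250 * c ^ 2 * t ^ 3 + 360 * a ^ 3 * z - 1500 * a * c * t * z
      + 1875 * c * z ^ 2) * Real.exp (-(6 * a / 5) * x)) y
      = (72 * a ^ 4 - 1200 * a ^ 2 * c * y + 3750 * c ^ 2 * y ^ 2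
        - 1500 * a * c * z) * Real.exp (-(6 * a / 5) * x) := by
    have h : HasDerivAt (fun t : ℝ => 72 * a ^ 4 * t - 600 * a ^ 2 * c * t ^ 2
        + 1250 * c ^ 2 * t ^ 3 + 360 * a ^ 3 * z - 1500 * a * c * t * z
        + 1875 * c * z ^ 2)
        (72 * a ^ 4 - 1200 * a ^ 2 * c * y + 3750 * c ^ 2 * y ^ 2
        - 1500 * a * c * z) y := by
      have := ((((((hasDerivAt_id y).const_mul (72 * a ^ 4)).sub
        (((hasDerivAt_pow 2 y).const_mul (600 * a ^ 2 * c)))).add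
        ((hasDerivAt_pow 3 y).const_mul (1250 * c ^ 2))).add_const (360 * a ^ 3 * z)).sub
        (((hasDerivAt_id y).const_mul (1500 * a * c)).mul_const z)).add_const
        (1875 * c * z ^ 2)
      exact this.congr_deriv (by simp only [Nat.reduceSub, Nat.cast_ofNat]; ring)
    exact (h.mul_const (Real.exp (-(6 * a / 5) * x))).deriv
  have hz : deriv (fun t => (72 * a ^ 4 * y - 600 * a ^ 2 * c * y ^ 2
      + 1250 * c ^ 2 * y ^ 3 + 360 * a ^ 3 * t - 1500 * a * c * y * t
      + 1875 * c * t ^ 2) * Real.exp (-(6 * a / 5) * x)) z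
      = (360 * a ^ 3 - 1500 * a * c * y + 3750 * c * z) * Real.exp (-(6 * a / 5) * x) := by
    have h : HasDerivAt (fun t : ℝ => 72 * a ^ 4 * y - 600 * a ^ 2 * c * y ^ 2
        + 1250 * c ^ 2 * y ^ 3 + 360 * a ^ 3 * t - 1500 * a * c * y * t
        + 1875 * c * t ^ 2)
        (360 * a ^ 3 - 1500 * a * c * y + 3750 * c * z) z := by
      have := (((hasDerivAt_const z (72 * a ^ 4 * y - 600 * a ^ 2 * c * y ^ 2
        + 1250 * c ^ 2 * y ^ 3)).add ((hasDerivAt_id z).const_mul (360 * a ^ 3))).sub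
        ((hasDerivAt_id z).const_mul (1500 * a * c * y))).add
        ((hasDerivAt_pow 2 z).const_mul (1875 * c))
      exact this.congr_deriv (by simp only [Nat.reduceSub, Nat.cast_ofNat]; ring)
    exact (h.mul_const (Real.exp (-(6 * a / 5) * x))).deriv
  simp only [Dtot, pdx, pdy, pdz, hx, hy, hz]
  ring
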